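/- Let N be an odd prime. Then the number of orbits of the action of (ℤ/Nℤ)ˣ on the 2-element subsets of ℤ/Nℤ equals (N+1)/2. -/

import Mathlib

open scoped BigOperators

/-- The orbit equivalence relation, on `d`-element subsets of `ℤ/Nℤ`, induced by the
multiplication action of `(ℤ/Nℤ)ˣ`: `u·S = {u·s : s ∈ S}`. -/
def subsetOrbitRel (N d : ℕ) (S S' : {s : Finset (ZMod N) // s.card = d}) : Prop :=
  ∃ u : (ZMod N)ˣ, Finset.image (fun x => (u : ZMod N) * x) S.1 = S'.1

namespace CardTwoOrbitsAux

variable {N : ℕ} [Fact N.Prime]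

/-- The complete invariant of a subset: whether it contains `0`, and `(∑ s)² / (∏ s)`. -/
noncomputable def F (s : Finset (ZMod N)) : Bool × ZMod N :=
  (decide ((0 : ZMod N) ∈ s), (∑ x ∈ s, x) ^ 2 * (∏ x ∈ s, x)⁻¹)

noncomputable def phi (r : ZMod N) : ZMod N := (1 + r) ^ 2 * r⁻¹

lemma zero_mem_decompose {s : Finset (ZMod N)} (h2 : s.card = 2)
    (h0 : (0 : ZMod N) ∈ s) : ∃ x : ZMod N, x ≠ 0 ∧ s = {0, x} := by
  obtain ⟨a, b, hab, rfl⟩ := Finset.card_eq_two.mp h2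
  simp only [Finset.mem_insert, Finset.mem_singleton] at h0
  rcases h0 with rfl | rfl
  · exact ⟨b, fun hb => hab hb.symm, rfl⟩
  · exact ⟨a, hab, Finset.pair_comm a 0⟩

lemma F_respects (S S' : {s : Finset (ZMod N) // s.card = 2})
    (h : subsetOrbitRel N 2 S S') : F S.1 = F S'.1 := by
  obtain ⟨u, hu⟩ := h
  have hu0 : (u : ZMod N) ≠ 0 := u.ne_zero
  have hmem : ((0 : ZMod N) ∈ S'.1) ↔ ((0 : ZMod N) ∈ S.1) := by
    rw [← hu]
    simp only [Finset.mem_image]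
    constructor
    · rintro ⟨x, hx, hux⟩
      rcases mul_eq_zero.mp hux with h | h
      · exact absurd h hu0
      · rwa [h] at hx
    · intro h0; exact ⟨0, h0, mul_zero _⟩
  have hinj : ∀ x ∈ S.1, ∀ y ∈ S.1, (u : ZMod N) * x = (u : ZMod N) * y → x = y :=
    fun x _ y _ h => mul_left_cancel₀ hu0 h
  have hsum : (∑ x ∈ S'.1, x) = (u : ZMod N) * ∑ x ∈ S.1, x := by
    rw [← hu, Finset.sum_image hinj, Finset.mul_sum]
  have hprod : (∏ x ∈ S'.1, x) = (u : ZMod N) ^ 2 * ∏ x ∈ S.1, x := by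
    rw [← hu, Finset.prod_image hinj, Finset.prod_mul_distrib, Finset.prod_const, S.2]
  unfold F
  refine Prod.ext ?_ ?_
  · simp [hmem]
  · simp only [hsum, hprod, mul_pow, mul_inv]
    field_simp

lemma F_inj (S S' : {s : Finset (ZMod N) // s.card = 2})
    (h : F S.1 = F S'.1) : subsetOrbitRel N 2 S S' := by
  have hmem : ((0 : ZMod N) ∈ S.1) ↔ ((0 : ZMod N) ∈ S'.1) := by
    have := congrArg Prod.fst h
    simpa [F, decide_eq_decide] using this
  have hval : (∑ x ∈ S.1, x) ^ 2 * (∏ x ∈ S.1, x)⁻¹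
      = (∑ x ∈ S'.1, x) ^ 2 * (∏ x ∈ S'.1, x)⁻¹ := congrArg Prod.snd h
  by_cases h0 : (0 : ZMod N) ∈ S.1
  · -- both contain zero
    obtain ⟨x, hx, hsx⟩ := zero_mem_decompose S.2 h0
    obtain ⟨y, hy, hsy⟩ := zero_mem_decompose S'.2 (hmem.mp h0)
    refine ⟨Units.mk0 (y * x⁻¹) (mul_ne_zero hy (inv_ne_zero hx)), ?_⟩
    rw [hsx, hsy]
    simp only [Units.val_mk0, Finset.image_insert, Finset.image_singleton, mul_zero]
    congr 1
    rw [mul_assoc, inv_mul_cancel₀ hx, mul_one]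
  · -- neither contains zero
    have h0' : (0 : ZMod N) ∉ S'.1 := fun hc => h0 (hmem.mpr hc)
    obtain ⟨a, b, hab, hs⟩ := Finset.card_eq_two.mp S.2
    obtain ⟨c, d, hcd, hs'⟩ := Finset.card_eq_two.mp S'.2
    rw [hs] at h0; rw [hs'] at h0'
    simp only [Finset.mem_insert, Finset.mem_singleton, not_or] at h0 h0'
    have ha : a ≠ 0 := fun hc => h0.1 hc.symm
    have hb : b ≠ 0 := fun hc => h0.2 hc.symm
    have hc : c ≠ 0 := fun hc => h0'.1 hc.symm
    have hd : d ≠ 0 := fun hc => h0'.2 hc.symm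
    rw [hs, hs'] at hval
    rw [Finset.sum_pair hab, Finset.prod_pair hab, Finset.sum_pair hcd,
      Finset.prod_pair hcd] at hval
    have key : (a + b) ^ 2 * (c * d) = (c + d) ^ 2 * (a * b) := by
      field_simp at hval
      linear_combination hval
    have hfac : (a * d - b * c) * (a * c - b * d) = 0 := by linear_combination key
    rcases mul_eq_zero.mp hfac with hcase | hcase
    · have had : a * d = b * c := by linear_combination hcase
      refine ⟨Units.mk0 (c * a⁻¹) (mul_ne_zero hc (inv_ne_zero ha)), ?_⟩
      rw [hs, hs']
      simp only [Units.val_mk0, Finset.image_insert, Finset.image_singleton]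
      congr 1
      · rw [mul_assoc, inv_mul_cancel₀ ha, mul_one]
      · congr 1
        field_simp
        linear_combination -had
    · have hac : a * c = b * d := by linear_combination hcase
      refine ⟨Units.mk0 (d * a⁻¹) (mul_ne_zero hd (inv_ne_zero ha)), ?_⟩
      rw [hs, hs']
      simp only [Units.val_mk0, Finset.image_insert, Finset.image_singleton]
      rw [Finset.pair_comm c d]
      congr 1
      · rw [mul_assoc, inv_mul_cancel₀ ha, mul_one]
      · congr 1
        field_simp
        linear_combination -hac

noncomputable def V (N : ℕ) [Fact N.Prime] : Finset (ZMod N) :=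
  Finset.univ.filter (fun r => r ≠ 0 ∧ r ≠ 1)

lemma F_pair_zero (x : ZMod N) (hx : x ≠ 0) : F ({0, x} : Finset (ZMod N)) = (true, 0) := by
  unfold F
  rw [Finset.sum_pair (Ne.symm hx), Finset.prod_pair (Ne.symm hx)]
  simp

lemma F_pair_one (r : ZMod N) (hr0 : r ≠ 0) (hr1 : r ≠ 1) :
    F ({1, r} : Finset (ZMod N)) = (false, phi r) := by
  unfold F phi
  rw [Finset.sum_pair (Ne.symm hr1), Finset.prod_pair (Ne.symm hr1)]
  refine Prod.ext ?_ ?_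
  · simp [Ne.symm hr0]
  · rw [one_mul]

lemma F_cases (S : {s : Finset (ZMod N) // s.card = 2}) :
    F S.1 = (true, (0 : ZMod N)) ∨ ∃ r, r ∈ V N ∧ F S.1 = (false, phi r) := by
  by_cases h0 : (0 : ZMod N) ∈ S.1
  · obtain ⟨x, hx, hsx⟩ := zero_mem_decompose S.2 h0
    left; rw [hsx]; exact F_pair_zero x hx
  · obtain ⟨a, b, hab, hs⟩ := Finset.card_eq_two.mp S.2
    rw [hs] at h0 ⊢
    simp only [Finset.mem_insert, Finset.mem_singleton, not_or] at h0
    have ha : a ≠ 0 := fun h => h0.1 h.symm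
    have hb : b ≠ 0 := fun h => h0.2 h.symm
    right
    refine ⟨b * a⁻¹, ?_, ?_⟩
    · simp only [V, Finset.mem_filter, Finset.mem_univ, true_and]
      refine ⟨mul_ne_zero hb (inv_ne_zero ha), fun h => hab ?_⟩
      field_simp at h
      exact h.symm
    · unfold F phi
      rw [Finset.sum_pair hab, Finset.prod_pair hab]
      refine Prod.ext ?_ ?_
      · simp [Ne.symm ha, Ne.symm hb]
      · field_simp

lemma range_F :
    Finset.image (fun S : {s : Finset (ZMod N) // s.card = 2} => F S.1) Finset.univ
      = insert (true, (0 : ZMod N)) (((V N).image phi).image (Prod.mk false)) := by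
  ext p
  simp only [Finset.mem_image, Finset.mem_univ, true_and, Finset.mem_insert]
  constructor
  · rintro ⟨S, rfl⟩
    rcases F_cases S with h | ⟨r, hrV, h⟩
    · left; exact h
    · right
      exact ⟨phi r, ⟨r, hrV, rfl⟩, h.symm⟩
  · rintro (rfl | hp)
    · exact ⟨⟨{0, 1}, Finset.card_pair zero_ne_one⟩, F_pair_zero 1 one_ne_zero⟩
    · obtain ⟨t, ⟨r, hrV, rfl⟩, rfl⟩ := hp
      simp only [V, Finset.mem_filter, Finset.mem_univ, true_and] at hrV
      obtain ⟨hr0, hr1⟩ := hrV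
      exact ⟨⟨{1, r}, Finset.card_pair (Ne.symm hr1)⟩, F_pair_one r hr0 hr1⟩

lemma V_card : (V N).card + 2 = N := by
  have hVs : V N = Finset.univ \ {0, 1} := by
    ext r
    simp only [V, Finset.mem_filter, Finset.mem_univ, true_and, Finset.mem_sdiff,
      Finset.mem_insert, Finset.mem_singleton, not_or]
  have h2 : ({0, 1} : Finset (ZMod N)).card = 2 := Finset.card_pair zero_ne_one
  have hle : 2 ≤ N := (Fact.out : N.Prime).two_le
  have hcard : Fintype.card (ZMod N) = N := ZMod.card N
  rw [hVs, Finset.card_sdiff_of_subset (Finset.subset_univ _), h2, Finset.card_univ, hcard]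
  omega

lemma phi_fiber_zero (h2 : (-1 : ZMod N) ≠ 1) :
    (V N).filter (fun r => phi r = 0) = {-1} := by
  ext r
  rw [Finset.mem_filter]
  simp only [V, Finset.mem_filter, Finset.mem_univ, true_and, Finset.mem_singleton, phi]
  constructor
  · rintro ⟨⟨hr0, _⟩, hphi⟩
    rcases mul_eq_zero.mp hphi with h | h
    · have h1 : (1 + r) = 0 := by
        exact (pow_eq_zero_iff two_ne_zero).mp h
      linear_combination h1
    · exact absurd h (inv_ne_zero hr0)
  · rintro rfl
    refine ⟨⟨?_, h2⟩, ?_⟩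
    · exact neg_ne_zero.mpr one_ne_zero
    · norm_num

lemma phi_fiber_two {t : ZMod N} (ht0 : t ≠ 0) {r : ZMod N} (hrV : r ∈ V N)
    (hphi : phi r = t) : ((V N).filter (fun x => phi x = t)).card = 2 := by
  simp only [V, Finset.mem_filter, Finset.mem_univ, true_and] at hrV
  obtain ⟨hr0, hr1⟩ := hrV
  have hrm1 : r ≠ -1 := by
    rintro rfl
    apply ht0
    rw [← hphi]
    unfold phi
    norm_num
  have hset : (V N).filter (fun x => phi x = t) = {r, r⁻¹} := by
    ext x
    simp only [V, Finset.mem_filter, Finset.mem_univ, true_and, Finset.mem_insert,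
      Finset.mem_singleton]
    constructor
    · rintro ⟨⟨hx0, hx1⟩, hx⟩
      have hpp : (1 + x) ^ 2 * x⁻¹ = (1 + r) ^ 2 * r⁻¹ := by
        unfold phi at hx hphi
        rw [hx, hphi]
      have heq : (1 + x) ^ 2 * r = (1 + r) ^ 2 * x := by
        field_simp at hpp
        linear_combination hpp
      have hfac : (x - r) * (1 - r * x) = 0 := by linear_combination -heq
      rcases mul_eq_zero.mp hfac with h | h
      · left; linear_combination h
      · right
        have hrx : r * x = 1 := by linear_combination -h
        field_simp
        linear_combination hrx
    · rintro (rfl | rfl)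
      · exact ⟨⟨hr0, hr1⟩, hphi⟩
      · refine ⟨⟨inv_ne_zero hr0, ?_⟩, ?_⟩
        · intro h
          apply hr1
          have := congrArg (·⁻¹) h
          simpa using this
        · rw [← hphi]
          unfold phi
          field_simp
          ring
  rw [hset]
  refine Finset.card_pair ?_
  intro h
  have hsq : r * r = 1 := by
    nth_rewrite 2 [h]
    exact mul_inv_cancel₀ hr0
  have : (r - 1) * (r + 1) = 0 := by linear_combination hsq
  rcases mul_eq_zero.mp this with h' | h'
  · exact hr1 (by linear_combination h')
  · exact hrm1 (by linear_combination h')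

lemma T_card (h2 : (-1 : ZMod N) ≠ 1) : 2 * ((V N).image phi).card + 1 = N := by
  have hsum := Finset.card_eq_sum_card_image phi (V N)
  set T := (V N).image phi with hT
  have h0T : (0 : ZMod N) ∈ T := by
    rw [hT]
    refine Finset.mem_image.mpr ⟨-1, ?_, ?_⟩
    · simp only [V, Finset.mem_filter, Finset.mem_univ, true_and]
      exact ⟨neg_ne_zero.mpr one_ne_zero, h2⟩
    · unfold phi; norm_num
  have hfib : ∀ t ∈ T, ((V N).filter (fun r => phi r = t)).card
      = if t = 0 then 1 else 2 := by
    intro t ht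
    obtain ⟨r, hrV, hphi⟩ := Finset.mem_image.mp ht
    by_cases h : t = 0
    · subst h; rw [phi_fiber_zero h2]; simp
    · rw [if_neg h]; exact phi_fiber_two h hrV hphi
  rw [Finset.sum_congr rfl hfib] at hsum
  rw [← Finset.insert_erase h0T, Finset.sum_insert (Finset.notMem_erase _ _),
    if_pos rfl] at hsum
  have herase : ∑ t ∈ T.erase 0, (if t = 0 then 1 else 2)
      = 2 * (T.erase 0).card := by
    rw [Finset.sum_congr rfl (fun t ht => if_neg (Finset.ne_of_mem_erase ht)),
      Finset.sum_const, smul_eq_mul, mul_comm]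
  rw [herase, Finset.card_erase_of_mem h0T] at hsum
  have hV := V_card (N := N)
  have hTpos : 1 ≤ T.card := Finset.card_pos.mpr ⟨0, h0T⟩
  omega

end CardTwoOrbitsAux

open CardTwoOrbitsAux in
/-- For an odd prime `N`, the number of orbits of the action of `(ℤ/Nℤ)ˣ` on the
`2`-element subsets of `ℤ/Nℤ` equals `(N+1)/2`. -/
theorem card_two_subset_orbits (N : ℕ) (hN : N.Prime) (hodd : Odd N) :
    (Nat.card (Quot (subsetOrbitRel N 2)) : ℚ) = ((N : ℚ) + 1) / 2 := by
  haveI : Fact N.Prime := ⟨hN⟩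
  have h2 : (-1 : ZMod N) ≠ 1 := by
    intro h
    have h20 : ((2 : ℕ) : ZMod N) = 0 := by push_cast; linear_combination -h
    rw [ZMod.natCast_eq_zero_iff] at h20
    have hle := Nat.le_of_dvd (by norm_num) h20
    obtain ⟨k, hk⟩ := hodd
    have := hN.two_le
    omega
  have hGinj : Function.Injective
      (Quot.lift (fun S : {s : Finset (ZMod N) // s.card = 2} => F S.1) F_respects) := by
    intro q q'
    induction q using Quot.ind with | _ S =>
    induction q' using Quot.ind with | _ S' =>
    intro h
    exact Quot.sound (F_inj S S' h)
  have hcards : Nat.card (Quot (subsetOrbitRel N 2)) = Nat.card (Set.range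
      (Quot.lift (fun S : {s : Finset (ZMod N) // s.card = 2} => F S.1) F_respects)) :=
    (Nat.card_range_of_injective hGinj).symm
  have hrange : Set.range
      (Quot.lift (fun S : {s : Finset (ZMod N) // s.card = 2} => F S.1) F_respects)
      = Set.range (fun S : {s : Finset (ZMod N) // s.card = 2} => F S.1) := by
    ext y
    constructor
    · rintro ⟨q, rfl⟩
      induction q using Quot.ind with | _ S =>
      exact ⟨S, rfl⟩
    · rintro ⟨S, rfl⟩
      exact ⟨Quot.mk _ S, rfl⟩
  have hrange2 : Set.range (fun S : {s : Finset (ZMod N) // s.card = 2} => F S.1)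
      = ↑(Finset.image (fun S : {s : Finset (ZMod N) // s.card = 2} => F S.1)
          Finset.univ) := by
    rw [Finset.coe_image, Finset.coe_univ, Set.image_univ]
  have hNc : Nat.card (Quot (subsetOrbitRel N 2))
      = (Finset.image (fun S : {s : Finset (ZMod N) // s.card = 2} => F S.1)
          Finset.univ).card := by
    rw [hcards, hrange, hrange2, Nat.card_coe_set_eq, Set.ncard_coe_finset]
  rw [range_F] at hNc
  have hins : ((true, (0 : ZMod N)) ∉ (((V N).image phi).image (Prod.mk false))) := by
    simp
  rw [Finset.card_insert_of_notMem hins,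
    Finset.card_image_of_injective _ (fun x y h => by simpa using h)] at hNc
  have hT := T_card (N := N) h2
  rw [eq_div_iff (by norm_num : (2 : ℚ) ≠ 0)]
  have key : Nat.card (Quot (subsetOrbitRel N 2)) * 2 = N + 1 := by omega
  exact_mod_cast key
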